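/- For any prime p and positive integers a, b with b ≤ a and any e ≥ 0, ν_p(C(a·p^e, b·p^e)) = ν_p(C(a, b)), where C denotes the binomial coefficient. -/
import Mathlib

theorem stmt5 (p a b e : ℕ) (hp : p.Prime) (ha : 0 < a) (hb : 0 < b) (hba : b ≤ a) :
    padicValNat p ((a * p ^ e).choose (b * p ^ e)) = padicValNat p (a.choose b) := by
  haveI : Fact p.Prime := ⟨hp⟩
  have hba' : b * p ^ e ≤ a * p ^ e := Nat.mul_le_mul_right _ hba
  have hsum : ∀ n : ℕ, 0 < n → (p.digits (n * p ^ e)).sum = (p.digits n).sum := by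
    intro n hn
    rw [mul_comm, Nat.digits_base_pow_mul hp.one_lt hn]
    simp
  have key := sub_one_mul_padicValNat_choose_eq_sub_sum_digits (p := p) hba'
  rw [← Nat.sub_mul, hsum a ha, hsum b hb] at key
  rcases Nat.eq_or_lt_of_le hba with rfl | hlt
  · simp
  · have hab : 0 < a - b := Nat.sub_pos_of_lt hlt
    rw [hsum (a - b) hab] at key
    have key2 := sub_one_mul_padicValNat_choose_eq_sub_sum_digits (p := p) hba
    have hp1 : 0 < p - 1 := Nat.sub_pos_of_lt hp.one_lt
    have := key.trans key2.symm
    exact Nat.eq_of_mul_eq_mul_left hp1 this
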